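/- arXiv:1408.5508 — 2 statements merged into one kernel-verified Lean document; each statement's English description precedes it below -/
import Mathlib

section
/- Let R → S be a faithfully flat ring homomorphism of commutative Noetherian rings and C a finitely generated R-module. Then the natural map R → Hom_R(C, C) is an isomorphism if and only if the natural map S → Hom_S(C ⊗_R S, C ⊗_R S) is an isomorphism. -/
open TensorProduct Function

section Helpers

variable {R S : Type*} [CommRing R] [CommRing S] [Algebra R S]

variable (R S) in
private lemma tensorProduct_tmul' {M N : Type*} [AddCommGroup M] [Module R M]
    [AddCommGroup N] [Module R N] (s : S) (f : M →ₗ[R] N) :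
    LinearMap.tensorProduct R S M N (s ⊗ₜ f) = s • f.baseChange S := rfl

/-- Faithfully flat base change preserves and reflects bijectivity. -/
private lemma bijective_baseChange_iff [Module.FaithfullyFlat R S]
    {M N : Type*} [AddCommGroup M] [Module R M] [AddCommGroup N] [Module R N]
    (f : M →ₗ[R] N) :
    Bijective (f.baseChange S) ↔ Bijective f := by
  constructor
  · rintro ⟨hi, hs⟩
    constructor
    · -- injectivity
      have h0 : (f ∘ₗ (LinearMap.ker f).subtype).baseChange S = 0 := by
        rw [show f ∘ₗ (LinearMap.ker f).subtype = 0 from LinearMap.ext fun x => x.2,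
          LinearMap.baseChange_zero]
      rw [LinearMap.baseChange_comp] at h0
      have hι : ∀ x : S ⊗[R] (LinearMap.ker f), ((LinearMap.ker f).subtype.baseChange S) x = 0 :=
        fun x => hi (by
          rw [← LinearMap.comp_apply, h0, LinearMap.zero_apply, map_zero])
      have hinj : Injective ((LinearMap.ker f).subtype.baseChange S) :=
        Module.Flat.lTensor_preserves_injective_linearMap _ Subtype.val_injective
      have hsub : Subsingleton (S ⊗[R] (LinearMap.ker f)) :=
        ⟨fun a b => hinj (by rw [hι a, hι b])⟩
      have : Subsingleton (LinearMap.ker f) :=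
        Module.FaithfullyFlat.lTensor_reflects_triviality R S _
      rw [← LinearMap.ker_eq_bot]
      exact Submodule.eq_bot_of_subsingleton
    · -- surjectivity
      have h0 : ((LinearMap.range f).mkQ ∘ₗ f).baseChange S = 0 := by
        rw [show (LinearMap.range f).mkQ ∘ₗ f = 0 from LinearMap.ext fun x => by
          simp [Submodule.Quotient.mk_eq_zero], LinearMap.baseChange_zero]
      rw [LinearMap.baseChange_comp] at h0
      have hπ : ∀ z, ((LinearMap.range f).mkQ.baseChange S) z = 0 := by
        intro z
        obtain ⟨w, rfl⟩ := hs z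
        rw [← LinearMap.comp_apply, h0, LinearMap.zero_apply]
      have hπs : Surjective ((LinearMap.range f).mkQ.baseChange S) :=
        LinearMap.lTensor_surjective S (LinearMap.range f).mkQ_surjective
      have hsub : Subsingleton (S ⊗[R] (N ⧸ LinearMap.range f)) :=
        ⟨fun a b => by
          obtain ⟨a', rfl⟩ := hπs a
          obtain ⟨b', rfl⟩ := hπs b
          rw [hπ a', hπ b']⟩
      have : Subsingleton (N ⧸ LinearMap.range f) :=
        Module.FaithfullyFlat.lTensor_reflects_triviality R S _
      rw [← LinearMap.range_eq_top]
      exact Submodule.Quotient.subsingleton_iff.mp this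
  · intro hf
    have : ⇑(f.baseChange S)
        = ⇑(LinearEquiv.baseChange R S M N (LinearEquiv.ofBijective f hf)) := by
      funext z
      induction z using TensorProduct.induction_on with
      | zero => simp
      | tmul s m => rfl
      | add x y hx hy => simp [map_add, hx, hy]
    rw [this]
    exact (LinearEquiv.baseChange R S M N (LinearEquiv.ofBijective f hf)).bijective


variable (R S) in
private lemma psi_free_bijective (ι : Type*) [Fintype ι] [DecidableEq ι]
    (N : Type*) [AddCommGroup N] [Module R N] :
    Bijective (LinearMap.tensorProduct R S (ι → R) N) := by
  let E1 : S ⊗[R] ((ι → R) →ₗ[R] N) ≃ₗ[S] S ⊗[R] (ι → N) :=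
    LinearEquiv.baseChange R S _ _ (LinearEquiv.piRing R N ι R)
  let E2 : S ⊗[R] (ι → N) ≃ₗ[S] (ι → S ⊗[R] N) :=
    TensorProduct.piRight R S S (fun _ : ι => N)
  let E3 : ((ι → S) →ₗ[S] S ⊗[R] N) ≃ₗ[S] (ι → S ⊗[R] N) :=
    LinearEquiv.piRing S (S ⊗[R] N) ι S
  let E4 : ((S ⊗[R] (ι → R)) →ₗ[S] S ⊗[R] N) ≃ₗ[S] ((ι → S) →ₗ[S] S ⊗[R] N) :=
    LinearEquiv.arrowCongr (TensorProduct.piScalarRight R S S ι)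
      (LinearEquiv.refl S (S ⊗[R] N))
  have key : ∀ z, E3 (E4 (LinearMap.tensorProduct R S (ι → R) N z)) = E2 (E1 z) := by
    intro z
    induction z using TensorProduct.induction_on with
    | zero => simp
    | tmul s f =>
      funext i
      rw [tensorProduct_tmul']
      simp only [E1, E2, E3, E4, LinearEquiv.baseChange, AlgebraTensorModule.congr_tmul,
        LinearEquiv.refl_apply, TensorProduct.piRight_apply, TensorProduct.piRightHom_tmul,
        LinearEquiv.piRing_apply, LinearEquiv.arrowCongr_apply, LinearMap.smul_apply,
        TensorProduct.piScalarRight_symm_single, LinearMap.baseChange_tmul]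
      rw [TensorProduct.smul_tmul', smul_eq_mul, mul_one]
    | add x y hx hy => simp only [map_add, hx, hy]
  have hEinj : Injective (⇑E3 ∘ ⇑E4) := E3.injective.comp E4.injective
  constructor
  · intro a b hab
    have := key a
    rw [hab, key b] at this
    exact (E1.injective (E2.injective this)).symm
  · intro φ
    refine ⟨E1.symm (E2.symm (E3 (E4 φ))), hEinj ?_⟩
    show E3 (E4 _) = E3 (E4 φ)
    rw [key, LinearEquiv.apply_symm_apply, LinearEquiv.apply_symm_apply]

variable (R S) in
private lemma psi_natural {M M' N : Type*} [AddCommGroup M] [Module R M]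
    [AddCommGroup M'] [Module R M'] [AddCommGroup N] [Module R N]
    (h : M' →ₗ[R] M) (z : S ⊗[R] (M →ₗ[R] N)) :
    LinearMap.tensorProduct R S M' N ((LinearMap.lcomp R N h).lTensor S z)
      = (LinearMap.tensorProduct R S M N z) ∘ₗ (h.baseChange S) := by
  induction z using TensorProduct.induction_on with
  | zero => simp
  | tmul s f =>
    rw [LinearMap.lTensor_tmul, tensorProduct_tmul', LinearMap.lcomp_apply',
      tensorProduct_tmul', LinearMap.baseChange_comp, LinearMap.smul_comp]
  | add x y hx hy =>
    rw [map_add, map_add, map_add, hx, hy, LinearMap.add_comp]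

variable (R S) in
private lemma psi_bijective [IsNoetherianRing R] [Module.Flat R S]
    (C : Type*) [AddCommGroup C] [Module R C] [Module.Finite R C] :
    Bijective (LinearMap.tensorProduct R S C C) := by
  classical
  obtain ⟨n, p, hp⟩ := Module.Finite.exists_fin' R C
  set K := LinearMap.ker p with hK
  haveI : Module.Finite R K :=
    Module.Finite.iff_fg.mpr (IsNoetherian.noetherian K)
  obtain ⟨m, q, hq⟩ := Module.Finite.exists_fin' R K
  set g : (Fin m → R) →ₗ[R] (Fin n → R) := K.subtype ∘ₗ q with hg
  have hpg : p ∘ₗ g = 0 := LinearMap.ext fun x => by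
    simp [g]
  -- left exactness of Hom(-, C)
  have h_inj : Injective (LinearMap.lcomp R C p) := by
    intro a b hab
    exact (LinearMap.cancel_right hp).mp hab
  have h_exact : Function.Exact (LinearMap.lcomp R C p) (LinearMap.lcomp R C g) := by
    intro f
    constructor
    · intro h0
      -- f vanishes on ker p, so it factors through p
      have hker : K ≤ LinearMap.ker f := by
        intro x hx
        obtain ⟨y, rfl⟩ : ∃ y, g y = x := by
          have : x ∈ LinearMap.range g := by
            rw [hg, LinearMap.range_comp, LinearMap.range_eq_top.mpr hq, Submodule.map_top,
              Submodule.range_subtype]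
            exact hx
          exact this
        have : (LinearMap.lcomp R C g) f = 0 := h0
        simp only [LinearMap.lcomp_apply'] at this
        rw [LinearMap.mem_ker, ← LinearMap.comp_apply, this, LinearMap.zero_apply]
      let e := p.quotKerEquivOfSurjective hp
      refine ⟨(K.liftQ f hker) ∘ₗ (e.symm : C →ₗ[R] _), ?_⟩
      apply LinearMap.ext; intro x
      have he : e (Submodule.Quotient.mk x) = p x := rfl
      simp only [LinearMap.lcomp_apply', LinearMap.comp_apply, LinearEquiv.coe_coe]
      rw [← he, LinearEquiv.symm_apply_apply, Submodule.liftQ_apply]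
    · rintro ⟨h, rfl⟩
      show (LinearMap.lcomp R C g) ((LinearMap.lcomp R C p) h) = 0
      simp only [LinearMap.lcomp_apply']
      rw [LinearMap.comp_assoc, hpg, LinearMap.comp_zero]
  have hfree_n := psi_free_bijective R S (Fin n) C
  have hfree_m := psi_free_bijective R S (Fin m) C
  have hz0 : ∀ z, LinearMap.tensorProduct R S C C z = 0 → z = 0 := by
    intro z hz
    have hw : LinearMap.tensorProduct R S (Fin n → R) C
        ((LinearMap.lcomp R C p).lTensor S z) = 0 := by
      rw [psi_natural, hz, LinearMap.zero_comp]
    have : (LinearMap.lcomp R C p).lTensor S z = 0 := by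
      apply hfree_n.injective
      rw [hw, map_zero]
    exact Module.Flat.lTensor_preserves_injective_linearMap _ h_inj (by rw [this, map_zero])
  constructor
  · intro a b hab
    have := hz0 (a - b) (by rw [map_sub, hab, sub_self])
    exact sub_eq_zero.mp this
  · intro φ
    obtain ⟨x, hx⟩ := hfree_n.surjective (φ ∘ₗ p.baseChange S)
    have h1 : (LinearMap.lcomp R C g).lTensor S x = 0 := by
      apply hfree_m.injective
      rw [map_zero, psi_natural, hx, LinearMap.comp_assoc, ← LinearMap.baseChange_comp, hpg,
        LinearMap.baseChange_zero, LinearMap.comp_zero]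
    have hex : Function.Exact ((LinearMap.lcomp R C p).lTensor S)
        ((LinearMap.lcomp R C g).lTensor S) :=
      Module.Flat.lTensor_exact S h_exact
    obtain ⟨z, hz⟩ := (hex x).mp h1
    refine ⟨z, ?_⟩
    have hpS : Surjective (p.baseChange S) := LinearMap.lTensor_surjective S hp
    apply (LinearMap.cancel_right hpS).mp
    rw [← psi_natural, hz, hx]

end Helpers

/-- Faithfully flat base change preserves and reflects the homothety map being an
isomorphism: for a faithfully flat map `R → S` of commutative Noetherian rings and a
finitely generated `R`-module `C`, the natural map `R → Hom_R(C, C)` is an isomorphism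
iff the natural map `S → Hom_S(C ⊗_R S, C ⊗_R S)` is one. -/
theorem homothety_bijective_iff_of_faithfullyFlat
    (R S : Type*) [CommRing R] [CommRing S]
    [IsNoetherianRing R] [IsNoetherianRing S]
    [Algebra R S] [Module.FaithfullyFlat R S]
    (C : Type*) [AddCommGroup C] [Module R C] [Module.Finite R C] :
    Function.Bijective (LinearMap.lsmul R C) ↔
      Function.Bijective (LinearMap.lsmul S (TensorProduct R S C)) := by
  have hψ := psi_bijective R S C
  have hτ : Bijective ⇑(TensorProduct.AlgebraTensorModule.rid R S S).symm :=
    (TensorProduct.AlgebraTensorModule.rid R S S).symm.bijective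
  have hfun : ⇑(LinearMap.lsmul S (TensorProduct R S C))
      = ⇑(LinearMap.tensorProduct R S C C) ∘ ⇑((LinearMap.lsmul R C).baseChange S)
        ∘ ⇑(TensorProduct.AlgebraTensorModule.rid R S S).symm := by
    funext s
    show LinearMap.lsmul S (TensorProduct R S C) s
      = LinearMap.tensorProduct R S C C ((LinearMap.lsmul R C).baseChange S
          ((TensorProduct.AlgebraTensorModule.rid R S S).symm s))
    rw [TensorProduct.AlgebraTensorModule.rid_symm_apply, LinearMap.baseChange_tmul,
      tensorProduct_tmul']
    have h1 : LinearMap.lsmul R C 1 = LinearMap.id := by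
      apply LinearMap.ext; intro x; simp
    rw [h1, LinearMap.baseChange_id]
    apply LinearMap.ext; intro x
    simp
  rw [hfun, Function.Bijective.of_comp_iff' hψ,
    Function.Bijective.of_comp_iff _ hτ, bijective_baseChange_iff]
end

section
/- Let k be a field, S a commutative k-algebra, and M, N S-modules. Suppose f ∈ M and g ∈ N are indivisible (i.e., cannot be written as aν with a a nonunit of S), and γ ∈ M, ρ ∈ N are not unit multiples of f and g respectively. Suppose there exist k-bases E of M, F of N, and X of S with f, γ ∈ E and g, ρ ∈ F, such that for every ξ ∈ X, ε ∈ E, η ∈ F, the product ξε is a k-scalar multiple of an element of E and ξη is a k-scalar multiple of an element of F. Then f ⊗ g − γ ⊗ ρ is nonzero in M ⊗_S N. -/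
open TensorProduct

section IndivAux

variable {k : Type*} [Field k] {S : Type*} [CommRing S] [Algebra k S]
variable {P : Type*} [AddCommGroup P] [Module S P] [Module k P] [IsScalarTower k S P]
variable {ιP ιS : Type*}

/-- One-step reachability between basis indices under the monomial action. -/
def AuxStep (c : ιS → ιP → k) (σ : ιS → ιP → ιP) (i i' : ιP) : Prop :=
  ∃ s, c s i ≠ 0 ∧ σ s i = i'

/-- Indices whose basis vector reaches the base point. -/
def AuxU (c : ιS → ιP → k) (σ : ιS → ιP → ιP) (p₀ : ιP) : Set ιP :=
  {i | Relation.ReflTransGen (AuxStep c σ) i p₀}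

theorem aux_smul_comm (a : k) (s : S) (x : P) : s • a • x = a • s • x := by
  rw [← smul_one_smul S a x, ← mul_smul, mul_smul_comm, mul_one]
  exact smul_assoc a s x

variable (G : Module.Basis ιP k P) (X : Module.Basis ιS k S)
variable {c : ιS → ιP → k} {σ : ιS → ιP → ιP}

theorem aux_expand (hP : ∀ s e, X s • G e = c s e • G (σ s e)) (y : S) (j : ιP) :
    y • G j = (X.repr y).sum fun t a => (a * c t j) • G (σ t j) := by
  conv_lhs => rw [← X.linearCombination_repr y]
  rw [Finsupp.linearCombination_apply, Finsupp.sum, Finsupp.sum, Finset.sum_smul]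
  refine Finset.sum_congr rfl fun t _ => ?_
  rw [smul_assoc, hP t j, smul_smul]

open Classical in
theorem aux_coord (hP : ∀ s e, X s • G e = c s e • G (σ s e)) (y : S) (j i : ιP) :
    G.repr (y • G j) i =
      ∑ t ∈ (X.repr y).support, if σ t j = i then X.repr y t * c t j else 0 := by
  classical
  rw [aux_expand G X hP y j, Finsupp.sum, map_sum, Finsupp.finset_sum_apply]
  refine Finset.sum_congr rfl fun t _ => ?_
  rw [map_smul, G.repr_self, Finsupp.smul_apply, Finsupp.single_apply, smul_eq_mul,
    mul_ite, mul_one, mul_zero]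

open Classical in
theorem aux_mem_of (hP : ∀ s e, X s • G e = c s e • G (σ s e)) {p₀ : ιP} {j : ιP}
    {d : k} (hd : d ≠ 0) {y : S} (h : y • G j = d • G p₀) : j ∈ AuxU c σ p₀ := by
  classical
  by_contra hj
  have hstep : ∀ t, ¬ (c t j ≠ 0 ∧ σ t j = p₀) := fun t ht =>
    hj (Relation.ReflTransGen.single ⟨t, ht⟩)
  have h1 : G.repr (y • G j) p₀ = d := by
    rw [h, map_smul, G.repr_self, Finsupp.smul_apply, Finsupp.single_eq_same,
      smul_eq_mul, mul_one]
  rw [aux_coord G X hP] at h1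
  rw [Finset.sum_eq_zero] at h1
  · exact hd h1.symm
  · intro t _
    split_ifs with hσ
    · rcases eq_or_ne (c t j) 0 with h0 | h0
      · rw [h0, mul_zero]
      · exact absurd ⟨h0, hσ⟩ (hstep t)
    · rfl

theorem aux_unit_orbit (hP : ∀ s e, X s • G e = c s e • G (σ s e)) {p₀ : ιP}
    (hind : ∀ (a : S) (ν : P), G p₀ = a • ν → IsUnit a)
    {i : ιP} (hi : i ∈ AuxU c σ p₀) :
    ∃ w : S, IsUnit w ∧ w • G p₀ = G i := by
  induction hi using Relation.ReflTransGen.head_induction_on with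
  | refl => exact ⟨1, isUnit_one, one_smul _ _⟩
  | head hstep _ ih =>
    rename_i i i' _
    obtain ⟨s, hcs, hσs⟩ := hstep
    obtain ⟨w', hw'u, hw'⟩ := ih
    have hXs : X s • G i = (c s i • w') • G p₀ := by
      rw [hP s i, hσs, ← hw', smul_assoc]
    have hvu : IsUnit (c s i • w') := by
      rw [Algebra.smul_def]
      exact ((isUnit_iff_ne_zero.2 hcs).map (algebraMap k S)).mul hw'u
    obtain ⟨v, hv⟩ := hvu
    have h1 : ((↑v⁻¹ : S) * X s) • G i = G p₀ := by
      rw [mul_smul, hXs, ← hv, smul_smul, Units.inv_mul, one_smul]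
    obtain ⟨u, hu⟩ := hind _ _ h1.symm
    refine ⟨(↑u⁻¹ : S), Units.isUnit _, ?_⟩
    rw [← h1, ← hu, smul_smul, Units.inv_mul, one_smul]

/-- The `S`-submodule spanned by the basis vectors whose index does not reach `p₀`. -/
def AuxMU (hP : ∀ s e, X s • G e = c s e • G (σ s e)) (p₀ : ιP) : Submodule S P where
  carrier := (Submodule.span k (G '' {i | i ∉ AuxU c σ p₀}) : Submodule k P)
  add_mem' := fun ha hb => Submodule.add_mem _ ha hb
  zero_mem' := Submodule.zero_mem _
  smul_mem' := by
    intro s m hm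
    simp only [SetLike.mem_coe] at *
    induction hm using Submodule.span_induction with
    | mem x hx =>
      obtain ⟨i, hi, rfl⟩ := hx
      rw [aux_expand G X hP s i, Finsupp.sum]
      refine Submodule.sum_mem _ fun t _ => ?_
      rcases eq_or_ne (c t i) 0 with h0 | h0
      · rw [h0, mul_zero, zero_smul]
        exact Submodule.zero_mem _
      · have hσ : σ t i ∉ AuxU c σ p₀ := fun hmem =>
          hi (Relation.ReflTransGen.head ⟨t, h0, rfl⟩ hmem)
        exact Submodule.smul_mem _ _ (Submodule.subset_span ⟨σ t i, hσ, rfl⟩)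
    | zero => rw [smul_zero]; exact Submodule.zero_mem _
    | add x y _ _ hx hy => rw [smul_add]; exact Submodule.add_mem _ hx hy
    | smul a x _ hx =>
      rw [aux_smul_comm]
      exact Submodule.smul_mem _ _ hx

theorem aux_mem_MU (hP : ∀ s e, X s • G e = c s e • G (σ s e)) {p₀ : ιP} {i : ιP}
    (hi : i ∉ AuxU c σ p₀) : G i ∈ AuxMU G X hP p₀ :=
  Submodule.subset_span ⟨i, hi, rfl⟩

theorem aux_kMU (hP : ∀ s e, X s • G e = c s e • G (σ s e)) {p₀ : ιP} (a : k) {x : P}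
    (hx : x ∈ AuxMU G X hP p₀) : a • x ∈ AuxMU G X hP p₀ := by
  rw [← smul_one_smul S a x]
  exact Submodule.smul_mem _ _ hx

theorem aux_vanish (hP : ∀ s e, X s • G e = c s e • G (σ s e)) {p₀ : ιP} {m : P}
    (hm : m ∈ AuxMU G X hP p₀) {i : ιP} (hi : i ∈ AuxU c σ p₀) :
    G.repr m i = 0 := by
  classical
  have hm' : m ∈ Submodule.span k (G '' {j | j ∉ AuxU c σ p₀}) := hm
  clear hm
  induction hm' using Submodule.span_induction with
  | mem x hx =>
    obtain ⟨j, hj, rfl⟩ := hx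
    rw [G.repr_self, Finsupp.single_apply]
    split_ifs with h
    · exact absurd (h ▸ hi) hj
    · rfl
  | zero => simp
  | add x y _ _ hx hy => rw [map_add, Finsupp.add_apply, hx, hy, add_zero]
  | smul a x _ hx => rw [map_smul, Finsupp.smul_apply, hx, smul_zero]

end IndivAux

/-- Let `k` be a field, `S` a commutative `k`-algebra, and `M`, `N` `S`-modules.
Suppose `f ∈ M` and `g ∈ N` are indivisible, and `γ ∈ M`, `ρ ∈ N` are not unit
multiples of `f` and `g` respectively.  If there exist `k`-bases `E`, `F`, `X` of
`M`, `N`, `S` with `f, γ ∈ E` and `g, ρ ∈ F` such that the product of any basis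
element of `S` with any basis element of `M` (resp. `N`) is a `k`-scalar multiple of
a basis element of `M` (resp. `N`), then `f ⊗ g - γ ⊗ ρ ≠ 0` in `M ⊗_S N`. -/
theorem tmul_sub_tmul_ne_zero_of_monomial_bases
    (k : Type*) [Field k] (S : Type*) [CommRing S] [Algebra k S]
    (M N : Type*) [AddCommGroup M] [AddCommGroup N]
    [Module S M] [Module S N] [Module k M] [Module k N]
    [IsScalarTower k S M] [IsScalarTower k S N]
    (f γ : M) (g ρ : N)
    -- `f` and `g` are indivisible
    (hf : ∀ (a : S) (ν : M), f = a • ν → IsUnit a)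
    (hg : ∀ (a : S) (ν : N), g = a • ν → IsUnit a)
    -- `γ` is not a unit multiple of `f`, and `ρ` is not a unit multiple of `g`
    (hγ : ∀ u : S, IsUnit u → γ ≠ u • f)
    (hρ : ∀ u : S, IsUnit u → ρ ≠ u • g)
    -- the `k`-bases `E`, `F`, `X` of `M`, `N`, `S`
    {ιM ιN ιS : Type*} (E : Module.Basis ιM k M) (F : Module.Basis ιN k N) (X : Module.Basis ιS k S)
    (if₀ iγ : ιM) (hfE : E if₀ = f) (hγE : E iγ = γ)
    (ig₀ iρ : ιN) (hgF : F ig₀ = g) (hρF : F iρ = ρ)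
    -- products of basis elements are scalar multiples of basis elements
    (hEX : ∀ (s : ιS) (e : ιM), ∃ (c : k) (i : ιM), X s • E e = c • E i)
    (hFX : ∀ (s : ιS) (e : ιN), ∃ (c : k) (i : ιN), X s • F e = c • F i) :
    f ⊗ₜ[S] g - γ ⊗ₜ[S] ρ ≠ 0 := by
  classical
  intro h0
  choose cM σM hM using hEX
  choose cN σN hN using hFX
  subst hfE hγE hgF hρF
  -- basic nontriviality facts
  have hnt : (1 : S) ≠ 0 := by
    intro h1
    have hz : ∀ m : M, m = 0 := fun m => by
      have h2 : m = (1 : S) • m := (one_smul S m).symm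
      rw [h1, zero_smul] at h2
      exact h2
    exact hγ 1 isUnit_one (by rw [hz (E iγ), hz ((1:S) • E if₀)])
  have hf0 : E if₀ ≠ 0 := by
    intro h
    have h2 := hf 0 0 (by rw [h, smul_zero])
    rw [isUnit_zero_iff] at h2
    exact hnt h2.symm
  have hg0 : F ig₀ ≠ 0 := by
    intro h
    have h2 := hg 0 0 (by rw [h, smul_zero])
    rw [isUnit_zero_iff] at h2
    exact hnt h2.symm
  have hif₀ : if₀ ∈ AuxU cM σM if₀ := Relation.ReflTransGen.refl
  have hig₀ : ig₀ ∈ AuxU cN σN ig₀ := Relation.ReflTransGen.refl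
  have hiγ : iγ ∉ AuxU cM σM if₀ := by
    intro h
    obtain ⟨w, hwu, hw⟩ := aux_unit_orbit E X hM hf h
    exact hγ w hwu hw.symm
  have hiρ : iρ ∉ AuxU cN σN ig₀ := by
    intro h
    obtain ⟨w, hwu, hw⟩ := aux_unit_orbit F X hN hg h
    exact hρ w hwu hw.symm
  -- choose unit representatives
  have hwM' : ∀ i : ιM, ∃ w : S, i ∈ AuxU cM σM if₀ → (IsUnit w ∧ w • E if₀ = E i) := by
    intro i
    by_cases h : i ∈ AuxU cM σM if₀
    · obtain ⟨w, hw⟩ := aux_unit_orbit E X hM hf h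
      exact ⟨w, fun _ => hw⟩
    · exact ⟨1, fun h' => absurd h' h⟩
  choose wM hwM using hwM'
  have hwN' : ∀ j : ιN, ∃ w : S, j ∈ AuxU cN σN ig₀ → (IsUnit w ∧ w • F ig₀ = F j) := by
    intro j
    by_cases h : j ∈ AuxU cN σN ig₀
    · obtain ⟨w, hw⟩ := aux_unit_orbit F X hN hg h
      exact ⟨w, fun _ => hw⟩
    · exact ⟨1, fun h' => absurd h' h⟩
  choose wN hwN using hwN'
  -- the coefficient maps
  set φ : M →ₗ[k] S :=
    (Finsupp.linearCombination k (fun i => if i ∈ AuxU cM σM if₀ then wM i else 0)).comp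
      E.repr.toLinearMap with hφdef
  set ψ : N →ₗ[k] S :=
    (Finsupp.linearCombination k (fun j => if j ∈ AuxU cN σN ig₀ then wN j else 0)).comp
      F.repr.toLinearMap with hψdef
  have hφbasis : ∀ i, φ (E i) = if i ∈ AuxU cM σM if₀ then wM i else 0 := by
    intro i
    simp only [hφdef, LinearMap.coe_comp, Function.comp_apply, LinearEquiv.coe_coe,
      Module.Basis.repr_self]
    rw [Finsupp.linearCombination_single, one_smul]
  have hψbasis : ∀ j, ψ (F j) = if j ∈ AuxU cN σN ig₀ then wN j else 0 := by
    intro j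
    simp only [hψdef, LinearMap.coe_comp, Function.comp_apply, LinearEquiv.coe_coe,
      Module.Basis.repr_self]
    rw [Finsupp.linearCombination_single, one_smul]
  have hφspec : ∀ m : M, m - φ m • E if₀ ∈ AuxMU E X hM if₀ := by
    intro m
    have hms : m = ∑ i ∈ (E.repr m).support, E.repr m i • E i := by
      conv_lhs => rw [← E.linearCombination_repr m]
      rw [Finsupp.linearCombination_apply, Finsupp.sum]
    have hφm : φ m • E if₀ = ∑ i ∈ (E.repr m).support,
        E.repr m i • ((if i ∈ AuxU cM σM if₀ then wM i else 0) • E if₀) := by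
      have h1 : φ m = ∑ i ∈ (E.repr m).support,
          E.repr m i • (if i ∈ AuxU cM σM if₀ then wM i else 0) := by
        simp only [hφdef, LinearMap.coe_comp, Function.comp_apply, LinearEquiv.coe_coe,
          Finsupp.linearCombination_apply, Finsupp.sum]
      rw [h1, Finset.sum_smul]
      exact Finset.sum_congr rfl fun i _ => smul_assoc _ _ _
    have key : m - φ m • E if₀ = ∑ i ∈ (E.repr m).support,
        (E.repr m i • E i -
          E.repr m i • ((if i ∈ AuxU cM σM if₀ then wM i else 0) • E if₀)) := by
      rw [Finset.sum_sub_distrib, ← hms, ← hφm]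
    rw [key]
    refine Submodule.sum_mem _ fun i _ => ?_
    by_cases h : i ∈ AuxU cM σM if₀
    · rw [if_pos h, (hwM i h).2, sub_self]
      exact Submodule.zero_mem _
    · rw [if_neg h, zero_smul, smul_zero, sub_zero]
      exact aux_kMU E X hM _ (aux_mem_MU E X hM h)
  have hψspec : ∀ n : N, n - ψ n • F ig₀ ∈ AuxMU F X hN ig₀ := by
    intro n
    have hns : n = ∑ j ∈ (F.repr n).support, F.repr n j • F j := by
      conv_lhs => rw [← F.linearCombination_repr n]
      rw [Finsupp.linearCombination_apply, Finsupp.sum]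
    have hψn : ψ n • F ig₀ = ∑ j ∈ (F.repr n).support,
        F.repr n j • ((if j ∈ AuxU cN σN ig₀ then wN j else 0) • F ig₀) := by
      have h1 : ψ n = ∑ j ∈ (F.repr n).support,
          F.repr n j • (if j ∈ AuxU cN σN ig₀ then wN j else 0) := by
        simp only [hψdef, LinearMap.coe_comp, Function.comp_apply, LinearEquiv.coe_coe,
          Finsupp.linearCombination_apply, Finsupp.sum]
      rw [h1, Finset.sum_smul]
      exact Finset.sum_congr rfl fun j _ => smul_assoc _ _ _
    have key : n - ψ n • F ig₀ = ∑ j ∈ (F.repr n).support,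
        (F.repr n j • F j -
          F.repr n j • ((if j ∈ AuxU cN σN ig₀ then wN j else 0) • F ig₀)) := by
      rw [Finset.sum_sub_distrib, ← hns, ← hψn]
    rw [key]
    refine Submodule.sum_mem _ fun j _ => ?_
    by_cases h : j ∈ AuxU cN σN ig₀
    · rw [if_pos h, (hwN j h).2, sub_self]
      exact Submodule.zero_mem _
    · rw [if_neg h, zero_smul, smul_zero, sub_zero]
      exact aux_kMU F X hN _ (aux_mem_MU F X hN h)
  -- the annihilator-type submodules of S
  set I : Submodule S S :=
    (AuxMU E X hM if₀).comap (LinearMap.toSpanSingleton S M (E if₀)) with hIdef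
  set J : Submodule S S :=
    (AuxMU F X hN ig₀).comap (LinearMap.toSpanSingleton S N (F ig₀)) with hJdef
  have hImem : ∀ x : S, x ∈ I ↔ x • E if₀ ∈ AuxMU E X hM if₀ := by
    intro x
    rw [hIdef, Submodule.mem_comap]
    rfl
  have hJmem : ∀ x : S, x ∈ J ↔ x • F ig₀ ∈ AuxMU F X hN ig₀ := by
    intro x
    rw [hJdef, Submodule.mem_comap]
    rfl
  have hImul : ∀ x, x ∈ I → ∀ y : S, x * y ∈ I := by
    intro x hx y
    rw [hImem] at hx ⊢
    rw [mul_comm, mul_smul]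
    exact Submodule.smul_mem _ _ hx
  have hJmul : ∀ x, x ∈ J → ∀ y : S, x * y ∈ J := by
    intro x hx y
    rw [hJmem] at hx ⊢
    rw [mul_comm, mul_smul]
    exact Submodule.smul_mem _ _ hx
  have hIφ : ∀ (s : S) (m : M), φ (s • m) - s * φ m ∈ I := by
    intro s m
    rw [hImem]
    have key : (φ (s • m) - s * φ m) • E if₀ =
        s • (m - φ m • E if₀) - (s • m - φ (s • m) • E if₀) := by
      rw [sub_smul, mul_smul, smul_sub]
      abel
    rw [key]
    exact Submodule.sub_mem _ (Submodule.smul_mem _ _ (hφspec m)) (hφspec (s • m))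
  have hJψ : ∀ (s : S) (n : N), ψ (s • n) - s * ψ n ∈ J := by
    intro s n
    rw [hJmem]
    have key : (ψ (s • n) - s * ψ n) • F ig₀ =
        s • (n - ψ n • F ig₀) - (s • n - ψ (s • n) • F ig₀) := by
      rw [sub_smul, mul_smul, smul_sub]
      abel
    rw [key]
    exact Submodule.sub_mem _ (Submodule.smul_mem _ _ (hψspec n)) (hψspec (s • n))
  set K : Submodule S S := I ⊔ J with hKdef
  -- the balanced bilinear map
  set B : M →ₗ[S] N →ₗ[S] (S ⧸ K) := LinearMap.mk₂ S (fun m n => K.mkQ (φ m * ψ n))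
    (fun m₁ m₂ n => by
      show K.mkQ (φ (m₁ + m₂) * ψ n) = K.mkQ (φ m₁ * ψ n) + K.mkQ (φ m₂ * ψ n)
      rw [map_add, add_mul, map_add])
    (fun s m n => by
      have he := hIφ s m
      show K.mkQ (φ (s • m) * ψ n) = s • K.mkQ (φ m * ψ n)
      have h1 : φ (s • m) * ψ n = s • (φ m * ψ n) + (φ (s • m) - s * φ m) * ψ n := by
        rw [smul_eq_mul]; ring
      rw [h1, map_add, map_smul]
      have hz : K.mkQ ((φ (s • m) - s * φ m) * ψ n) = 0 := by
        rw [Submodule.mkQ_apply, Submodule.Quotient.mk_eq_zero]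
        exact (le_sup_left : I ≤ K) (hImul _ he _)
      rw [hz, add_zero])
    (fun m n₁ n₂ => by
      show K.mkQ (φ m * ψ (n₁ + n₂)) = K.mkQ (φ m * ψ n₁) + K.mkQ (φ m * ψ n₂)
      rw [map_add, mul_add, map_add])
    (fun s m n => by
      have he := hJψ s n
      show K.mkQ (φ m * ψ (s • n)) = s • K.mkQ (φ m * ψ n)
      have h1 : φ m * ψ (s • n) = s • (φ m * ψ n) + (ψ (s • n) - s * ψ n) * φ m := by
        rw [smul_eq_mul]; ring
      rw [h1, map_add, map_smul]
      have hz : K.mkQ ((ψ (s • n) - s * ψ n) * φ m) = 0 := by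
        rw [Submodule.mkQ_apply, Submodule.Quotient.mk_eq_zero]
        exact (le_sup_right : J ≤ K) (hJmul _ he _)
      rw [hz, add_zero]) with hBdef
  -- applying the lift to the hypothesis
  have hv := congrArg (TensorProduct.lift B) h0
  rw [map_sub, map_zero, TensorProduct.lift.tmul, TensorProduct.lift.tmul] at hv
  rw [hBdef] at hv
  rw [LinearMap.mk₂_apply, LinearMap.mk₂_apply] at hv
  have hφγ : φ (E iγ) = 0 := by rw [hφbasis, if_neg hiγ]
  have hφf : φ (E if₀) = wM if₀ := by rw [hφbasis, if_pos hif₀]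
  have hψg : ψ (F ig₀) = wN ig₀ := by rw [hψbasis, if_pos hig₀]
  rw [hφγ, zero_mul, map_zero, sub_zero, hφf, hψg] at hv
  have humem : wM if₀ * wN ig₀ ∈ K := by
    rwa [Submodule.mkQ_apply, Submodule.Quotient.mk_eq_zero] at hv
  have hu : IsUnit (wM if₀ * wN ig₀) := ((hwM if₀ hif₀).1).mul ((hwN ig₀ hig₀).1)
  obtain ⟨u, hu⟩ := hu
  have h1K : (1 : S) ∈ K := by
    have h2 := K.smul_mem (↑u⁻¹ : S) humem
    rwa [smul_eq_mul, ← hu, Units.inv_mul] at h2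
  rw [hKdef] at h1K
  obtain ⟨a, ha, b, hb, hab⟩ := Submodule.mem_sup.1 h1K
  have haf : a • E if₀ ∈ AuxMU E X hM if₀ := (hImem a).1 ha
  have hbg : b • F ig₀ ∈ AuxMU F X hN ig₀ := (hJmem b).1 hb
  have hbf : b • E if₀ - E if₀ ∈ AuxMU E X hM if₀ := by
    have h1 : a • E if₀ + b • E if₀ = E if₀ := by rw [← add_smul, hab, one_smul]
    have h3 : a • E if₀ + b • E if₀ - E if₀ = 0 := by rw [h1, sub_self]
    have h2 : b • E if₀ - E if₀ = -(a • E if₀) := by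
      calc b • E if₀ - E if₀ = (a • E if₀ + b • E if₀ - E if₀) - a • E if₀ := by abel
      _ = -(a • E if₀) := by rw [h3, zero_sub]
    rw [h2]
    exact Submodule.neg_mem _ haf
  -- the two-sided characterization of the "unit" part of the support
  have hTfwd : ∀ s : ιS, cM s if₀ ≠ 0 → σM s if₀ ∈ AuxU cM σM if₀ →
      (cN s ig₀ ≠ 0 ∧ σN s ig₀ ∈ AuxU cN σN ig₀) := by
    intro s hc hσ
    obtain ⟨w, hwu, hw⟩ := aux_unit_orbit E X hM hf hσ
    have hXs : X s • E if₀ = (cM s if₀ • w) • E if₀ := by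
      rw [hM s if₀, ← hw, smul_assoc]
    have hvu : IsUnit (cM s if₀ • w) := by
      rw [Algebra.smul_def]
      exact ((isUnit_iff_ne_zero.2 hc).map (algebraMap k S)).mul hwu
    obtain ⟨v, hv⟩ := hvu
    have hXunit : IsUnit (X s) := by
      have h1 : ((↑v⁻¹ : S) * X s) • E if₀ = E if₀ := by
        rw [mul_smul, hXs, ← hv, smul_smul, Units.inv_mul, one_smul]
      have h2 := hf _ _ h1.symm
      have h3 : X s = ↑v * ((↑v⁻¹ : S) * X s) := by
        rw [← mul_assoc, Units.mul_inv, one_mul]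
      rw [h3]
      exact v.isUnit.mul h2
    obtain ⟨xu, hxu⟩ := hXunit
    have hdg : cN s ig₀ ≠ 0 := by
      intro h
      refine hg0 ?_
      have h1 : X s • F ig₀ = 0 := by rw [hN s ig₀, h, zero_smul]
      have h2 : F ig₀ = ((↑xu⁻¹ : S) * X s) • F ig₀ := by
        rw [← hxu, Units.inv_mul, one_smul]
      rw [h2, mul_smul, h1, smul_zero]
    have hτ : σN s ig₀ ∈ AuxU cN σN ig₀ := by
      have h2 : F ig₀ = cN s ig₀ • ((↑xu⁻¹ : S) • F (σN s ig₀)) := by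
        have h3 : F ig₀ = (↑xu⁻¹ : S) • (X s • F ig₀) := by
          rw [← mul_smul, ← hxu, Units.inv_mul, one_smul]
        rw [h3, hN s ig₀, aux_smul_comm]
      have h1 : (↑xu⁻¹ : S) • F (σN s ig₀) = (cN s ig₀)⁻¹ • F ig₀ := by
        rw [h2, smul_smul, inv_mul_cancel₀ hdg, one_smul]
      exact aux_mem_of F X hN (inv_ne_zero hdg) h1
    exact ⟨hdg, hτ⟩
  have hTbwd : ∀ s : ιS, cN s ig₀ ≠ 0 → σN s ig₀ ∈ AuxU cN σN ig₀ →
      (cM s if₀ ≠ 0 ∧ σM s if₀ ∈ AuxU cM σM if₀) := by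
    intro s hc hσ
    obtain ⟨w, hwu, hw⟩ := aux_unit_orbit F X hN hg hσ
    have hXs : X s • F ig₀ = (cN s ig₀ • w) • F ig₀ := by
      rw [hN s ig₀, ← hw, smul_assoc]
    have hvu : IsUnit (cN s ig₀ • w) := by
      rw [Algebra.smul_def]
      exact ((isUnit_iff_ne_zero.2 hc).map (algebraMap k S)).mul hwu
    obtain ⟨v, hv⟩ := hvu
    have hXunit : IsUnit (X s) := by
      have h1 : ((↑v⁻¹ : S) * X s) • F ig₀ = F ig₀ := by
        rw [mul_smul, hXs, ← hv, smul_smul, Units.inv_mul, one_smul]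
      have h2 := hg _ _ h1.symm
      have h3 : X s = ↑v * ((↑v⁻¹ : S) * X s) := by
        rw [← mul_assoc, Units.mul_inv, one_mul]
      rw [h3]
      exact v.isUnit.mul h2
    obtain ⟨xu, hxu⟩ := hXunit
    have hdg : cM s if₀ ≠ 0 := by
      intro h
      refine hf0 ?_
      have h1 : X s • E if₀ = 0 := by rw [hM s if₀, h, zero_smul]
      have h2 : E if₀ = ((↑xu⁻¹ : S) * X s) • E if₀ := by
        rw [← hxu, Units.inv_mul, one_smul]
      rw [h2, mul_smul, h1, smul_zero]
    have hτ : σM s if₀ ∈ AuxU cM σM if₀ := by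
      have h2 : E if₀ = cM s if₀ • ((↑xu⁻¹ : S) • E (σM s if₀)) := by
        have h3 : E if₀ = (↑xu⁻¹ : S) • (X s • E if₀) := by
          rw [← mul_smul, ← hxu, Units.inv_mul, one_smul]
        rw [h3, hM s if₀, aux_smul_comm]
      have h1 : (↑xu⁻¹ : S) • E (σM s if₀) = (cM s if₀)⁻¹ • E if₀ := by
        rw [h2, smul_smul, inv_mul_cancel₀ hdg, one_smul]
      exact aux_mem_of E X hM (inv_ne_zero hdg) h1
    exact ⟨hdg, hτ⟩
  -- the unit part of b
  set β := X.repr b with hβ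
  set Tf : Finset ιS := β.support.filter
    (fun s => cM s if₀ ≠ 0 ∧ σM s if₀ ∈ AuxU cM σM if₀) with hTf
  set bT : S := ∑ s ∈ Tf, β s • X s with hbT
  have hcoordT : ∀ i : ιM, E.repr (bT • E if₀) i =
      ∑ s ∈ Tf, if σM s if₀ = i then β s * cM s if₀ else 0 := by
    intro i
    rw [hbT, Finset.sum_smul, map_sum, Finsupp.finset_sum_apply]
    refine Finset.sum_congr rfl fun s _ => ?_
    rw [smul_assoc, hM s if₀, smul_smul, map_smul, E.repr_self, Finsupp.smul_apply,
      Finsupp.single_apply, smul_eq_mul, mul_ite, mul_one, mul_zero]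
  have hcoordTg : ∀ j : ιN, F.repr (bT • F ig₀) j =
      ∑ s ∈ Tf, if σN s ig₀ = j then β s * cN s ig₀ else 0 := by
    intro j
    rw [hbT, Finset.sum_smul, map_sum, Finsupp.finset_sum_apply]
    refine Finset.sum_congr rfl fun s _ => ?_
    rw [smul_assoc, hN s ig₀, smul_smul, map_smul, F.repr_self, Finsupp.smul_apply,
      Finsupp.single_apply, smul_eq_mul, mul_ite, mul_one, mul_zero]
  have hbTf : bT • E if₀ = E if₀ := by
    apply E.repr.injective
    ext i
    rw [hcoordT i]
    by_cases hi : i ∈ AuxU cM σM if₀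
    · have h1 : E.repr (b • E if₀) i = E.repr (E if₀) i := by
        have h2 := aux_vanish E X hM hbf hi
        rw [map_sub, Finsupp.sub_apply, sub_eq_zero] at h2
        exact h2
      have h3 : ∑ s ∈ Tf, (if σM s if₀ = i then β s * cM s if₀ else 0)
          = ∑ s ∈ β.support, (if σM s if₀ = i then β s * cM s if₀ else 0) := by
        refine Finset.sum_subset (Finset.filter_subset _ _) ?_
        intro s hs hns
        rw [hTf, Finset.mem_filter] at hns
        push_neg at hns
        have h4 := hns hs
        split_ifs with hσ
        · rcases eq_or_ne (cM s if₀) 0 with h5 | h5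
          · rw [h5, mul_zero]
          · exact absurd (by rw [hσ]; exact hi) (h4 h5)
        · rfl
      have h5 : E.repr (b • E if₀) i
          = ∑ s ∈ β.support, (if σM s if₀ = i then β s * cM s if₀ else 0) :=
        aux_coord E X hM b if₀ i
      rw [h3, ← h5, h1]
    · have h6 : ∀ s ∈ Tf, (if σM s if₀ = i then β s * cM s if₀ else 0) = 0 := by
        intro s hs
        rw [hTf, Finset.mem_filter] at hs
        split_ifs with hσ
        · exact absurd (hσ ▸ hs.2.2) hi
        · rfl
      rw [Finset.sum_eq_zero h6, E.repr_self, Finsupp.single_apply, if_neg]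
      intro hh
      exact hi (hh ▸ hif₀)
  have hbTg : bT • F ig₀ = 0 := by
    apply F.repr.injective
    ext j
    rw [map_zero, hcoordTg j, Finsupp.coe_zero, Pi.zero_apply]
    by_cases hj : j ∈ AuxU cN σN ig₀
    · have h1 : F.repr (b • F ig₀) j = 0 := aux_vanish F X hN hbg hj
      have h3 : ∑ s ∈ Tf, (if σN s ig₀ = j then β s * cN s ig₀ else 0)
          = ∑ s ∈ β.support, (if σN s ig₀ = j then β s * cN s ig₀ else 0) := by
        refine Finset.sum_subset (Finset.filter_subset _ _) ?_
        intro s hs hns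
        rw [hTf, Finset.mem_filter] at hns
        push_neg at hns
        have h4 := hns hs
        split_ifs with hσ
        · rcases eq_or_ne (cN s ig₀) 0 with h5 | h5
          · rw [h5, mul_zero]
          · have h7 := hTbwd s h5 (by rw [hσ]; exact hj)
            exact absurd h7.2 (h4 h7.1)
        · rfl
      have h5 : F.repr (b • F ig₀) j
          = ∑ s ∈ β.support, (if σN s ig₀ = j then β s * cN s ig₀ else 0) :=
        aux_coord F X hN b ig₀ j
      rw [h3, ← h5, h1]
    · refine Finset.sum_eq_zero ?_
      intro s hs
      rw [hTf, Finset.mem_filter] at hs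
      split_ifs with hσ
      · exact absurd (hσ ▸ (hTfwd s hs.2.1 hs.2.2).2) hj
      · rfl
  -- conclusion
  have hbTu : IsUnit bT := hf bT (E if₀) hbTf.symm
  obtain ⟨u2, hu2⟩ := hbTu
  refine hg0 ?_
  have hfin : F ig₀ = ((↑u2⁻¹ : S) * bT) • F ig₀ := by
    rw [← hu2, Units.inv_mul, one_smul]
  rw [hfin, mul_smul, hbTg, smul_zero]
end
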